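/- Let D be a digraph, let (R_i)_{i∈I} be an infinite family of pairwise disjoint equivalent out-rays, and suppose there exist families of paths (P_{i,j})_{i<j∈I} and (Q_{i,j})_{i>j∈I} such that: P_{i,j} is an R_i–R_j path internally disjoint from all rays, the paths (P_{i,j})_{j>i} are pairwise disjoint for each fixed i; Q_{i,j} is an R_i–R_j path internally disjoint from all rays, the paths (Q_{i,k})_{i>k} are pairwise disjoint for each fixed k; and for all i, j < k the end vertex of P_{i,k} precedes the start vertex of Q_{k,j} on R_k. Then for any infinite subset I_4 ⊆ I with I \ I_4 infinite, there exists an out-ray Ŝ in D intersecting every ray (R_i)_{i∈I_4} infinitely often such that for every ordered pair (i, j) of distinct elements of I_4 there are infinitely many pairwise disjoint R_i–R_j paths lying on Ŝ and internally disjoint from ⋃_{i∈I_4} R_i. -/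

import Mathlib

variable {V : Type*}

/-- An out-ray: a one-way infinite directed path oriented away from its start. -/
def IsOutRay (D : Digraph V) (f : ℕ → V) : Prop :=
  Function.Injective f ∧ ∀ n, D.Adj (f n) (f (n + 1))

/-- An in-ray: a one-way infinite directed path oriented towards its start. -/
def IsInRay (D : Digraph V) (f : ℕ → V) : Prop :=
  Function.Injective f ∧ ∀ n, D.Adj (f (n + 1)) (f n)

/-- A finite directed path, given as a nonempty duplicate-free list of vertices. -/
def IsDipath (D : Digraph V) (p : List V) : Prop :=
  p ≠ [] ∧ p.Nodup ∧ p.Chain' D.Adj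

def StartsIn (p : List V) (A : Set V) : Prop := ∃ a ∈ A, p.head? = some a

def EndsIn (p : List V) (B : Set V) : Prop := ∃ b ∈ B, p.getLast? = some b

def ListsDisjoint (p q : List V) : Prop := ∀ v ∈ p, v ∉ q

/-- There are infinitely many pairwise disjoint directed A–B paths. -/
def ManyDisjointPaths (D : Digraph V) (A B : Set V) : Prop :=
  ∃ P : ℕ → List V,
    (∀ n, IsDipath D (P n) ∧ StartsIn (P n) A ∧ EndsIn (P n) B) ∧
    ∀ m n, m ≠ n → ListsDisjoint (P m) (P n)

/-- Two rays are equivalent: infinitely many disjoint paths in both directions. -/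
def EquivRays (D : Digraph V) (R₁ R₂ : ℕ → V) : Prop :=
  ManyDisjointPaths D (Set.range R₁) (Set.range R₂) ∧
  ManyDisjointPaths D (Set.range R₂) (Set.range R₁)

/-- The internal vertices of a path. -/
def Internals (p : List V) : List V := p.tail.dropLast

def InternallyAvoids (p : List V) (U : Set V) : Prop := ∀ v ∈ Internals p, v ∉ U

/-- Infinitely many pairwise disjoint `A`–`B` paths whose internal vertices avoid `U`. -/
def ManyDisjointPathsAvoiding (D : Digraph V) (A B U : Set V) : Prop :=
  ∃ P : ℕ → List V,
    (∀ n, IsDipath D (P n) ∧ StartsIn (P n) A ∧ EndsIn (P n) B ∧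
      InternallyAvoids (P n) U) ∧
    ∀ m n, m ≠ n → ListsDisjoint (P m) (P n)

/-- The union of the vertex sets of a family of rays. -/
def RaysUnion {I : Type*} (R : I → ℕ → V) : Set V := ⋃ i, Set.range (R i)

/-- A non-trivial finite segment of a ray `R`, from position `s` to position `t`. -/
def IsRaySegment (R : ℕ → V) (q : List V) : Prop :=
  ∃ s t : ℕ, s < t ∧ q = (List.range (t - s + 1)).map fun m => R (s + m)

/-- `L` is a staircase for the sequence of ray-indices `seq`: a concatenation
`P₀ Q₁ P₁ ⋯ Q_{n-1} P_{n-1}` where `P k` is an `R (seq k)`–`R (seq (k+1))` path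
internally disjoint from all rays and each `Q k` (for `k ≥ 1`) is a non-trivial
segment of `R (seq k)`. -/
def IsStaircase {I : Type*} (D : Digraph V) (R : I → ℕ → V) {n : ℕ}
    (seq : Fin (n + 1) → I) (L : List V) : Prop :=
  ∃ P Q : Fin n → List V,
    (∀ k : Fin n, IsDipath D (P k) ∧
      StartsIn (P k) (Set.range (R (seq k.castSucc))) ∧
      EndsIn (P k) (Set.range (R (seq k.succ))) ∧
      InternallyAvoids (P k) (RaysUnion R)) ∧
    (∀ k : Fin n, 1 ≤ k.val → IsRaySegment (R (seq k.castSucc)) (Q k)) ∧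
    (∀ k : Fin n, ∀ h : 1 ≤ k.val,
      (P ⟨k.val - 1, by omega⟩).getLast? = (Q k).head? ∧
      (Q k).getLast? = (P k).head?) ∧
    L = (List.ofFn fun k : Fin n =>
      if k.val = 0 then P k else (Q k).tail ++ (P k).tail).flatten ∧
    IsDipath D L

/-- `p` is a contiguous subpath of the ray `S`. -/
def IsSubpathOf (S : ℕ → V) (p : List V) : Prop :=
  ∃ s : ℕ, p = (List.range p.length).map fun m => S (s + m)

namespace Aux16
open List

noncomputable def seg (R : ℕ → V) (s n : ℕ) : List V :=
  (List.range n).map fun m => R (s + m)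

lemma seg_length (R : ℕ → V) (s n : ℕ) : (seg R s n).length = n := by
  simp [seg]

lemma seg_nodup {R : ℕ → V} (hR : Function.Injective R) (s n : ℕ) :
    (seg R s n).Nodup := by
  refine List.Nodup.map ?_ List.nodup_range
  intro a b h
  have := hR h; omega

lemma seg_chain {D : Digraph V} {R : ℕ → V} (hR : ∀ n, D.Adj (R n) (R (n+1))) (s n : ℕ) :
    (seg R s n).Chain' D.Adj := by
  cases n with
  | zero => simp [seg, List.Chain']
  | succ n =>
    rw [seg, List.Chain', List.isChain_map, List.isChain_range_succ]
    intro m _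
    have := hR (s + m)
    have he : s + m + 1 = s + Nat.succ m := by omega
    rwa [he] at this

lemma seg_head {R : ℕ → V} (s : ℕ) {n : ℕ} (h : 0 < n) :
    (seg R s n).head? = some (R s) := by
  cases n with
  | zero => omega
  | succ n => simp [seg, List.range_succ_eq_map]

lemma seg_getElem {R : ℕ → V} (s : ℕ) {n m : ℕ} (h : m < n) :
    (seg R s n)[m]'(by simp [seg_length]; omega) = R (s + m) := by
  simp [seg]

lemma seg_last {R : ℕ → V} (s : ℕ) {n : ℕ} (h : 0 < n) :
    (seg R s n).getLast? = some (R (s + (n - 1))) := by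
  have hl : n - 1 < n := by omega
  have := seg_getElem (R := R) s hl
  rw [List.getLast?_eq_getElem?, List.getElem?_eq_getElem (by simp [seg_length]; omega)]
  refine congrArg some ?_
  calc (seg R s n)[(seg R s n).length - 1]'_
      = (seg R s n)[n-1]'(by simp [seg_length]; omega) := by
        congr 1 <;> simp [seg_length]
    _ = R (s + (n - 1)) := this

lemma seg_mem {R : ℕ → V} {s n : ℕ} {u : V} (h : u ∈ seg R s n) :
    ∃ m, m < n ∧ u = R (s + m) := by
  simp only [seg, List.mem_map, List.mem_range] at h
  obtain ⟨m, hm, rfl⟩ := h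
  exact ⟨m, hm, rfl⟩

lemma mem_seg {R : ℕ → V} {s n m : ℕ} (h : m < n) : R (s + m) ∈ seg R s n := by
  simp only [seg, List.mem_map, List.mem_range]
  exact ⟨m, h, rfl⟩

/-- split a list at the first element satisfying `p`. -/
lemma split_first {p : V → Prop} :
    ∀ {l : List V}, (∃ v ∈ l, p v) →
    ∃ l₁ v l₂, l = l₁ ++ v :: l₂ ∧ p v ∧ ∀ u ∈ l₁, ¬ p u := by
  intro l
  induction l with
  | nil => rintro ⟨v, hv, -⟩; simp at hv
  | cons x t ih =>
    intro h
    by_cases hx : p x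
    · exact ⟨[], x, t, by simp, hx, by simp⟩
    · have ht : ∃ v ∈ t, p v := by
        obtain ⟨v, hv, hpv⟩ := h
        rcases List.mem_cons.1 hv with rfl | hv
        · exact absurd hpv hx
        · exact ⟨v, hv, hpv⟩
      obtain ⟨l₁, v, l₂, rfl, hpv, hl₁⟩ := ih ht
      refine ⟨x :: l₁, v, l₂, by simp, hpv, ?_⟩
      intro u hu
      rcases List.mem_cons.1 hu with rfl | hu
      · exact hx
      · exact hl₁ u hu

lemma getLast?_concat' (x : V) (t' : List V) (c : V) :
    (x :: (t' ++ [c])).getLast? = some c := by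
  rw [List.getLast?_eq_getElem?]
  simp

lemma mem_internals_of {l : List V} {u a b : V} (hu : u ∈ l) (hh : l.head? = some a)
    (hb : l.getLast? = some b) (h1 : u ≠ a) (h2 : u ≠ b) : u ∈ Internals l := by
  cases l with
  | nil => simp at hu
  | cons x t =>
    simp only [List.head?_cons, Option.some.injEq] at hh
    subst hh
    rcases List.mem_cons.1 hu with rfl | hu
    · exact absurd rfl h1
    · rcases List.eq_nil_or_concat t with rfl | ⟨t', c, hc⟩
      · simp at hu
      · rw [List.concat_eq_append] at hc
        subst hc
        rw [getLast?_concat' _ t' c] at hb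
        obtain rfl : c = b := by injection hb
        simp only [Internals, List.tail_cons, List.dropLast_concat]
        rcases List.mem_append.1 hu with hu | hu
        · exact hu
        · simp at hu; exact absurd hu h2

lemma internals_mem {l : List V} {u : V} (hu : u ∈ Internals l) : u ∈ l := by
  have := List.dropLast_sublist l.tail
  exact List.mem_of_mem_tail (this.mem hu)

lemma internals_spec {l : List V} (hn : l.Nodup) {u : V} (hu : u ∈ Internals l) :
    u ∈ l ∧ l.head? ≠ some u ∧ l.getLast? ≠ some u := by
  refine ⟨internals_mem hu, ?_, ?_⟩
  · intro hh
    cases l with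
    | nil => simp [Internals] at hu
    | cons x t =>
      simp only [List.head?_cons, Option.some.injEq] at hh
      simp only [Internals, List.tail_cons] at hu
      have hut : u ∈ t := (List.dropLast_sublist t).mem hu
      rw [hh] at hn
      exact (List.nodup_cons.1 hn).1 hut
  · intro hb
    cases l with
    | nil => simp [Internals] at hu
    | cons x t =>
      rcases List.eq_nil_or_concat t with rfl | ⟨t', c, hc⟩
      · simp [Internals] at hu
      · rw [List.concat_eq_append] at hc
        subst hc
        rw [getLast?_concat' _ t' c] at hb
        have hcu : c = u := by injection hb
        simp only [Internals, List.tail_cons, List.dropLast_concat] at hu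
        have hn' : (t' ++ [c]).Nodup := (List.nodup_cons.1 hn).2
        exact List.disjoint_of_nodup_append hn' (hcu ▸ hu) (by simp)

lemma head?_append_cons (l₁ l₂ l₃ : List V) (a : V) :
    (l₁ ++ a :: l₂).head? = (l₁ ++ a :: l₃).head? := by
  cases l₁ <;> simp

end Aux16
namespace Aux16
open List Set

lemma finite_meet {V : Type*} [Nonempty V] {T : Set ℕ} {A : ℕ → Set V}
    (hd : ∀ k ∈ T, ∀ k' ∈ T, k ≠ k' → ∀ v, v ∈ A k → v ∉ A k') (U : List V) :
    {k ∈ T | ∃ v ∈ A k, v ∈ U}.Finite := by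
  classical
  set s := {k ∈ T | ∃ v ∈ A k, v ∈ U} with hs
  have hch : ∀ k ∈ s, ∃ v, v ∈ A k ∧ v ∈ U := by
    rintro k ⟨-, v, hv, hvU⟩; exact ⟨v, hv, hvU⟩
  choose! f hf1 hf2 using hch
  have himg : (f '' s).Finite := (U.finite_toSet).subset (by rintro _ ⟨k, hk, rfl⟩; exact hf2 k hk)
  refine Set.Finite.of_finite_image himg ?_
  intro k hk k' hk' hfe
  by_contra hne
  exact hd k hk.1 k' hk'.1 hne (f k) (hf1 k hk) (hfe ▸ hf1 k' hk')

lemma finite_le {T : Set ℕ} {f : ℕ → ℕ} (hinj : Set.InjOn f T) (N : ℕ) :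
    {k ∈ T | f k ≤ N}.Finite := by
  refine Set.Finite.of_finite_image ((Set.finite_Iic N).subset ?_)
    (hinj.mono fun k hk => hk.1)
  rintro _ ⟨k, hk, rfl⟩
  exact hk.2

lemma exists_bound {V : Type*} {R : ℕ → V} (hR : Function.Injective R) (L : List V) :
    ∃ N, ∀ m, R m ∈ L → m < N := by
  have hfin : {m | R m ∈ L}.Finite := by
    refine Set.Finite.of_finite_image ((L.finite_toSet).subset ?_) (hR.injOn)
    rintro _ ⟨m, hm, rfl⟩; exact hm
  obtain ⟨N, hN⟩ := hfin.bddAbove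
  exact ⟨N + 1, fun m hm => by have := hN hm; omega⟩

end Aux16

structure Cfg (V : Type*) where
  L : List V
  cur : ℕ
  pos : ℕ

def OkCfg {V : Type*} (D : Digraph V) (R : ℕ → ℕ → V) (c : Cfg V) : Prop :=
  c.L ≠ [] ∧ c.L.Nodup ∧ c.L.Chain' D.Adj ∧ c.L.getLast? = some (R c.cur c.pos) ∧
  ∀ m, R c.cur m ∈ c.L → m ≤ c.pos

def StepP {V : Type*} (D : Digraph V) (R : ℕ → ℕ → V) (I₄ : Set ℕ) (i j : ℕ)
    (c c' : Cfg V) : Prop :=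
  c.L <+: c'.L ∧ ∃ Comp : List V,
    Comp <:+ c'.L ∧ c.L.length + Comp.length ≤ c'.L.length ∧
    IsDipath D Comp ∧ StartsIn Comp (Set.range (R i)) ∧ EndsIn Comp (Set.range (R j)) ∧
    InternallyAvoids Comp (⋃ k ∈ I₄, Set.range (R k))

namespace Aux16
open List Set

variable {V : Type*}

lemma ray_mem_union (R : ℕ → ℕ → V) (t m : ℕ) : R t m ∈ RaysUnion R :=
  Set.mem_iUnion.2 ⟨t, ⟨m, rfl⟩⟩

lemma step_exists (D : Digraph V) (R : ℕ → ℕ → V)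
    (hray : ∀ i, IsOutRay D (R i))
    (hdisj : ∀ i j, i ≠ j → ∀ n m, R i n ≠ R j m)
    (P Q : ℕ → ℕ → List V)
    (hP : ∀ i j, i < j → IsDipath D (P i j) ∧ StartsIn (P i j) (Set.range (R i)) ∧
      EndsIn (P i j) (Set.range (R j)) ∧ InternallyAvoids (P i j) (RaysUnion R))
    (hPdisj : ∀ i j k, i < j → i < k → j ≠ k → ListsDisjoint (P i j) (P i k))
    (hQ : ∀ i j, j < i → IsDipath D (Q i j) ∧ StartsIn (Q i j) (Set.range (R i)) ∧
      EndsIn (Q i j) (Set.range (R j)) ∧ InternallyAvoids (Q i j) (RaysUnion R))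
    (hQdisj : ∀ i j k, k < i → k < j → i ≠ j → ListsDisjoint (Q i k) (Q j k))
    (horder : ∀ i j k, i < k → j < k → ∃ a b : ℕ,
      (P i k).getLast? = some (R k a) ∧ (Q k j).head? = some (R k b) ∧ a < b)
    (I₄ : Set ℕ) (hI₄c : I₄ᶜ.Infinite)
    {i j : ℕ} (hi : i ∈ I₄) (hj : j ∈ I₄) (hij : i ≠ j)
    (c : Cfg V) (hc : OkCfg D R c) (hcur : c.cur = i) :
    ∃ c' : Cfg V, OkCfg D R c' ∧ c'.cur = j ∧ StepP D R I₄ i j c c' := by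
  classical
  have : Nonempty V := ⟨R 0 0⟩
  obtain ⟨hLne, hLnodup, hLchain, hLlast, hinv⟩ := hc
  rw [hcur] at hLlast hinv
  -- bound for positions on R j used in c.L
  obtain ⟨N, hN⟩ := exists_bound (hray j).1 c.L
  -- start positions of P i k
  have hqf : ∀ k, ∃ q, max i j < k → (P i k).head? = some (R i q) := by
    intro k
    by_cases hk : max i j < k
    · obtain ⟨v, ⟨q, rfl⟩, hh⟩ := (hP i k (by omega)).2.1
      exact ⟨q, fun _ => hh⟩
    · exact ⟨0, fun h => absurd h hk⟩
  choose qf hqf using hqf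
  -- end positions of Q k j
  have hrf : ∀ k, ∃ r, max i j < k → (Q k j).getLast? = some (R j r) := by
    intro k
    by_cases hk : max i j < k
    · obtain ⟨v, ⟨r, rfl⟩, hh⟩ := (hQ k j (by omega)).2.2.1
      exact ⟨r, fun _ => hh⟩
    · exact ⟨0, fun h => absurd h hk⟩
  choose rf hrf using hrf
  set T : Set ℕ := {k | k ∉ I₄ ∧ max i j < k} with hT
  have hTinf : T.Infinite := by
    refine Set.Infinite.mono ?_ (hI₄c.diff (Set.finite_Iic (max i j)))
    rintro k ⟨hk1, hk2⟩
    exact ⟨hk1, by simpa using hk2⟩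
  have hqinj : Set.InjOn qf T := by
    intro k hk k' hk' he
    have hg1 := hk.2
    have hg2 := hk'.2
    by_contra hne
    have h1 : R i (qf k) ∈ P i k := List.mem_of_mem_head? (by simp [hqf k hk.2])
    have h2 : R i (qf k') ∈ P i k' := List.mem_of_mem_head? (by simp [hqf k' hk'.2])
    rw [he] at h1
    exact hPdisj i k k' (by omega) (by omega) hne _ h1 h2
  have hrinj : Set.InjOn rf T := by
    intro k hk k' hk' he
    have hg1 := hk.2
    have hg2 := hk'.2
    by_contra hne
    have h1 : R j (rf k) ∈ Q k j := List.mem_of_mem_getLast? (by simp [hrf k hk.2])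
    have h2 : R j (rf k') ∈ Q k' j := List.mem_of_mem_getLast? (by simp [hrf k' hk'.2])
    rw [he] at h1
    exact hQdisj k k' j (by omega) (by omega) hne _ h1 h2
  have hB1 : {k ∈ T | ∃ v ∈ ({v | v ∈ P i k} : Set V), v ∈ c.L}.Finite := by
    refine finite_meet (fun k hk k' hk' hne v hv => ?_) c.L
    exact hPdisj i k k' (by have := hk.2; omega) (by have := hk'.2; omega) hne v hv
  have hB2 : {k ∈ T | ∃ v ∈ ({v | v ∈ Q k j} : Set V), v ∈ c.L}.Finite := by
    refine finite_meet (fun k hk k' hk' hne v hv => ?_) c.L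
    exact hQdisj k k' j (by have := hk.2; omega) (by have := hk'.2; omega) hne v hv
  have hB3 : {k ∈ T | ∃ v ∈ Set.range (R k), v ∈ c.L}.Finite := by
    refine finite_meet (fun k _ k' _ hne v hv hv' => ?_) c.L
    obtain ⟨m, rfl⟩ := hv
    obtain ⟨m', he⟩ := hv'
    exact hdisj k' k (Ne.symm hne) m' m he
  have hB4 : {k ∈ T | qf k ≤ c.pos}.Finite := finite_le hqinj c.pos
  have hB5 : {k ∈ T | rf k ≤ N}.Finite := finite_le hrinj N
  have hgood : (T \ ({k ∈ T | ∃ v ∈ ({v | v ∈ P i k} : Set V), v ∈ c.L} ∪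
      {k ∈ T | ∃ v ∈ ({v | v ∈ Q k j} : Set V), v ∈ c.L} ∪
      {k ∈ T | ∃ v ∈ Set.range (R k), v ∈ c.L} ∪
      {k ∈ T | qf k ≤ c.pos} ∪ {k ∈ T | rf k ≤ N})).Infinite :=
    hTinf.diff ((((hB1.union hB2).union hB3).union hB4).union hB5)
  obtain ⟨k, hkmem⟩ := hgood.nonempty
  obtain ⟨hkT, hkbad⟩ := hkmem
  simp only [Set.mem_union, not_or, Set.mem_setOf_eq, Set.mem_sep_iff] at hkbad
  obtain ⟨⟨⟨⟨hbad1, hbad2⟩, hbad3⟩, hbad4⟩, hbad5⟩ := hkbad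
  obtain ⟨hkI, hkgt⟩ := hkT
  have hik : i < k := by omega
  have hjk : j < k := by omega
  have hkTmem : k ∈ T := ⟨hkI, hkgt⟩
  have avoidP : ∀ v ∈ P i k, v ∉ c.L := fun v hv hvL => hbad1 ⟨hkTmem, v, hv, hvL⟩
  have avoidQ : ∀ v ∈ Q k j, v ∉ c.L := fun v hv hvL => hbad2 ⟨hkTmem, v, hv, hvL⟩
  have avoidR : ∀ m, R k m ∉ c.L := fun m hm => hbad3 ⟨hkTmem, R k m, ⟨m, rfl⟩, hm⟩
  have hqpos : c.pos < qf k := by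
    rcases Nat.lt_or_ge c.pos (qf k) with h | h
    · exact h
    · exact absurd ⟨hkTmem, by omega⟩ hbad4
  have hrN : N ≤ rf k := by
    rcases Nat.lt_or_ge N (rf k + 1) with h | h
    · omega
    · exact absurd ⟨hkTmem, by omega⟩ hbad5
  set q := qf k with hq
  set r := rf k with hr
  have hAhead : (P i k).head? = some (R i q) := hqf k hkgt
  have hClast : (Q k j).getLast? = some (R j r) := hrf k hkgt
  obtain ⟨a, b, hAlast, hChead, hab⟩ := horder i j k hik hjk
  obtain ⟨hAne, hAnodup, hAchain⟩ := (hP i k hik).1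
  have hAint : InternallyAvoids (P i k) (RaysUnion R) := (hP i k hik).2.2.2
  obtain ⟨hCne, hCnodup, hCchain⟩ := (hQ k j hjk).1
  have hCint : InternallyAvoids (Q k j) (RaysUnion R) := (hQ k j hjk).2.2.2
  set A := P i k with hA
  set C := Q k j with hC
  -- membership classification in A and C
  have AmemD : ∀ u ∈ A, u = R i q ∨ u = R k a ∨ u ∉ RaysUnion R := by
    intro u hu
    by_cases h1 : u = R i q
    · exact Or.inl h1
    by_cases h2 : u = R k a
    · exact Or.inr (Or.inl h2)
    exact Or.inr (Or.inr (hAint u (mem_internals_of hu hAhead hAlast h1 h2)))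
  have CmemD : ∀ u ∈ C, u = R k b ∨ u = R j r ∨ u ∉ RaysUnion R := by
    intro u hu
    by_cases h1 : u = R k b
    · exact Or.inl h1
    by_cases h2 : u = R j r
    · exact Or.inr (Or.inl h2)
    exact Or.inr (Or.inr (hCint u (mem_internals_of hu hChead hClast h1 h2)))
  set sab := seg (R k) (a + 1) (b - a) with hsab
  have hsabne : b - a ≠ 0 := by omega
  have sab_mem : ∀ u ∈ sab, ∃ m, a < m ∧ m ≤ b ∧ u = R k m := by
    intro u hu
    obtain ⟨m, hm, rfl⟩ := seg_mem hu
    exact ⟨a + 1 + m, by omega, by omega, rfl⟩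
  set D1 := A ++ sab with hD1
  have hD1nodup : D1.Nodup := by
    rw [hD1, List.nodup_append]
    refine ⟨hAnodup, seg_nodup (hray k).1 _ _, ?_⟩
    rintro u huA _ husab rfl
    obtain ⟨m, hm1, hm2, rfl⟩ := sab_mem u husab
    rcases AmemD _ huA with h | h | h
    · exact hdisj k i (fun he => (Nat.ne_of_lt hik) he.symm) m q h
    · have := (hray k).1 h
      omega
    · exact h (ray_mem_union R k m)
  have hD1chain : D1.Chain' D.Adj := by
    rw [hD1, List.Chain', List.isChain_append]
    refine ⟨hAchain, seg_chain (hray k).2 _ _, ?_⟩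
    intro x hx y hy
    rw [hAlast] at hx
    rw [seg_head _ (by omega)] at hy
    simp only [Option.mem_some_iff] at hx hy
    subst hx; subst hy
    exact (hray k).2 a
  have hD1head : D1.head? = some (R i q) := by
    rw [hD1, List.head?_append, hAhead]
    rfl
  have hD1last : D1.getLast? = some (R k b) := by
    rw [hD1, List.getLast?_append, seg_last _ (by omega)]
    have : a + 1 + (b - a - 1) = b := by omega
    rw [this]
    rfl
  have hD1mem : ∀ u ∈ D1, u = R i q ∨ (∃ m, u = R k m) ∨ u ∉ RaysUnion R := by
    intro u hu
    rcases List.mem_append.1 hu with hu | hu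
    · rcases AmemD u hu with h | h | h
      · exact Or.inl h
      · exact Or.inr (Or.inl ⟨a, h⟩)
      · exact Or.inr (Or.inr h)
    · obtain ⟨m, _, _, rfl⟩ := sab_mem u hu
      exact Or.inr (Or.inl ⟨m, rfl⟩)
  -- the vertex R j r is not on D1
  have hRjrD1 : R j r ∉ D1 := by
    intro hmem
    rcases hD1mem _ hmem with h | ⟨m, h⟩ | h
    · exact hdisj j i (Ne.symm hij) r q h
    · exact hdisj j k (by omega) r m h
    · exact h (ray_mem_union R j r)
  -- split at the first vertex of D1 lying on C
  have hvex : ∃ v ∈ D1, v ∈ C := by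
    refine ⟨R k b, List.mem_of_mem_getLast? (by simp [hD1last]), ?_⟩
    exact List.mem_of_mem_head? (by simp [hChead])
  obtain ⟨pre, v, post, hD1eq, hvC, hpre⟩ := split_first hvex
  obtain ⟨C1, C2, hCeq⟩ := List.append_of_mem hvC
  have hvC2 : v :: C2 <:+ C := ⟨C1, hCeq.symm⟩
  set Comp := pre ++ v :: C2 with hComp
  have hCompne : Comp ≠ [] := by simp [hComp]
  -- C2 is nonempty
  have hC2ne : C2 ≠ [] := by
    rintro rfl
    have : C.getLast? = some v := by
      rw [hCeq, List.getLast?_append]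
      simp
    rw [hClast] at this
    have hv : v = R j r := by injection this with hinj; exact hinj.symm
    apply hRjrD1
    rw [← hv, hD1eq]
    simp
  have hCompnodup : Comp.Nodup := by
    rw [hComp, List.nodup_append]
    refine ⟨?_, ?_, ?_⟩
    · exact List.Nodup.sublist (List.sublist_append_left _ _) (hD1eq ▸ hD1nodup)
    · exact List.Nodup.sublist hvC2.sublist hCnodup
    · rintro u hu _ hu' rfl
      have huC : u ∈ C := hvC2.sublist.mem hu'
      exact hpre u hu huC
  have hCompchain : Comp.Chain' D.Adj := by
    rw [hComp, List.Chain', List.isChain_append]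
    refine ⟨?_, ?_, ?_⟩
    · exact (hD1eq ▸ hD1chain).prefix ⟨v :: post, rfl⟩
    · exact hCchain.suffix hvC2
    · intro x hx y hy
      simp only [List.head?_cons, Option.mem_some_iff] at hy
      subst hy
      have hch := hD1eq ▸ hD1chain
      rw [List.Chain', List.isChain_append] at hch
      exact hch.2.2 x hx v (by simp)
  have hComphead : Comp.head? = some (R i q) := by
    rw [hComp, head?_append_cons pre C2 post v, ← hD1eq, hD1head]
  have hComplast : Comp.getLast? = some (R j r) := by
    rw [hComp, List.getLast?_append]
    have h1 : (v :: C2).getLast? = some (R j r) := by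
      have : C.getLast? = (v :: C2).getLast?.or C1.getLast? := by
        rw [hCeq, List.getLast?_append]
      rw [hClast] at this
      cases hgl : (v :: C2).getLast? with
      | none => simp [List.getLast?_eq_none_iff] at hgl
      | some x =>
        rw [hgl] at this
        have hx : some (R j r) = some x := this.trans rfl
        exact hx.symm
    rw [h1]
    rfl
  have hCompmem : ∀ u ∈ Comp, u ∈ D1 ∨ u ∈ C := by
    intro u hu
    rcases List.mem_append.1 hu with hu | hu
    · exact Or.inl (by rw [hD1eq]; exact List.mem_append_left _ hu)
    · exact Or.inr (hvC2.sublist.mem hu)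
  have hCompclass : ∀ u ∈ Comp, u = R i q ∨ u = R j r ∨ (∃ m, u = R k m) ∨ u ∉ RaysUnion R := by
    intro u hu
    rcases hCompmem u hu with hu | hu
    · rcases hD1mem u hu with h | h | h
      · exact Or.inl h
      · exact Or.inr (Or.inr (Or.inl h))
      · exact Or.inr (Or.inr (Or.inr h))
    · rcases CmemD u hu with h | h | h
      · exact Or.inr (Or.inr (Or.inl ⟨b, h⟩))
      · exact Or.inr (Or.inl h)
      · exact Or.inr (Or.inr (Or.inr h))
  have hCompavoid : ∀ u ∈ Comp, u ∉ c.L := by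
    intro u hu
    rcases hCompmem u hu with hu | hu
    · rcases List.mem_append.1 (hD1 ▸ hu) with hu | hu
      · exact avoidP u hu
      · obtain ⟨m, _, _, rfl⟩ := sab_mem u hu
        exact avoidR m
    · exact avoidQ u hu
  have hCompint : InternallyAvoids Comp (⋃ k' ∈ I₄, Set.range (R k')) := by
    intro u hu humem
    obtain ⟨huC, hh, hl⟩ := internals_spec hCompnodup hu
    simp only [Set.mem_iUnion] at humem
    obtain ⟨k', hk', m', rfl⟩ := humem
    rcases hCompclass _ huC with h | h | ⟨m, h⟩ | h
    · exact hh (by rw [h]; exact hComphead)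
    · exact hl (by rw [h]; exact hComplast)
    · exact (hdisj k' k (fun he => hkI (he ▸ hk')) m' m) h
    · exact h (ray_mem_union R k' m')
  -- the connecting segment along R i
  set mid2 := seg (R i) (c.pos + 1) (q - 1 - c.pos) with hmid2
  have mid2_mem : ∀ u ∈ mid2, ∃ m, c.pos < m ∧ m < q ∧ u = R i m := by
    intro u hu
    obtain ⟨m, hm, rfl⟩ := seg_mem hu
    exact ⟨c.pos + 1 + m, by omega, by omega, rfl⟩
  have hmid2Comp : ∀ u ∈ mid2, u ∉ Comp := by
    intro u hu huC
    obtain ⟨m, hm1, hm2, rfl⟩ := mid2_mem u hu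
    rcases hCompclass _ huC with h | h | ⟨m', h⟩ | h
    · have := (hray i).1 h; omega
    · exact hdisj i j hij m r h
    · exact hdisj i k (by omega) m m' h
    · exact h (ray_mem_union R i m)
  refine ⟨⟨c.L ++ (mid2 ++ Comp), j, r⟩, ?_, rfl, ?_⟩
  · refine ⟨by simp [hLne], ?_, ?_, ?_, ?_⟩
    · rw [List.nodup_append]
      refine ⟨hLnodup, ?_, ?_⟩
      · rw [List.nodup_append]
        refine ⟨seg_nodup (hray i).1 _ _, hCompnodup, fun u hu _ hb he => hmid2Comp u hu (he ▸ hb)⟩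
      · rintro u huL _ humem rfl
        rcases List.mem_append.1 humem with hu | hu
        · obtain ⟨m, hm1, _, rfl⟩ := mid2_mem u hu
          have := hinv m huL
          omega
        · exact hCompavoid u hu huL
    · rw [List.Chain', List.isChain_append]
      refine ⟨hLchain, ?_, ?_⟩
      · rw [List.isChain_append]
        refine ⟨seg_chain (hray i).2 _ _, hCompchain, ?_⟩
        intro x hx y hy
        by_cases hm0 : q - 1 - c.pos = 0
        · rw [hmid2, hm0] at hx
          simp [seg] at hx
        · rw [hmid2, seg_last _ (by omega)] at hx
          rw [hComphead] at hy
          simp only [Option.mem_some_iff] at hx hy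
          subst hx; subst hy
          have he : c.pos + 1 + (q - 1 - c.pos - 1) + 1 = q := by omega
          have := (hray i).2 (c.pos + 1 + (q - 1 - c.pos - 1))
          rwa [he] at this
      · intro x hx y hy
        rw [hLlast] at hx
        simp only [Option.mem_some_iff] at hx
        subst hx
        have hy' : y = R i (c.pos + 1) := by
          by_cases hm0 : q - 1 - c.pos = 0
          · have hmnil : mid2 = [] := by rw [hmid2, hm0]; simp [seg]
            rw [hmnil] at hy
            simp only [List.nil_append] at hy
            rw [hComphead] at hy
            simp only [Option.mem_some_iff] at hy
            have : q = c.pos + 1 := by omega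
            rw [← hy, this]
          · rw [List.head?_append, hmid2, seg_head _ (by omega)] at hy
            have : y ∈ some (R i (c.pos + 1)) := hy
            simp only [Option.mem_some_iff] at this
            exact this.symm
        rw [hy']
        exact (hray i).2 c.pos
    · show (c.L ++ (mid2 ++ Comp)).getLast? = some (R j r)
      rw [List.getLast?_append, List.getLast?_append, hComplast]
      simp
    · show ∀ m, R j m ∈ c.L ++ (mid2 ++ Comp) → m ≤ r
      intro m hm
      rcases List.mem_append.1 hm with hm | hm
      · have := hN m hm; omega
      · rcases List.mem_append.1 hm with hm | hm
        · obtain ⟨m', _, _, he⟩ := mid2_mem _ hm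
          exact absurd he (hdisj j i (Ne.symm hij) m m')
        · rcases hCompclass _ hm with h | h | ⟨m', h⟩ | h
          · exact absurd h (hdisj j i (Ne.symm hij) m q)
          · have := (hray j).1 h; omega
          · exact absurd h (hdisj j k (by omega) m m')
          · exact absurd (ray_mem_union R j m) h
  · refine ⟨⟨mid2 ++ Comp, rfl⟩, Comp, ⟨c.L ++ mid2, by simp⟩, ?_, ⟨hCompne, hCompnodup, hCompchain⟩, ⟨R i q, ⟨q, rfl⟩, hComphead⟩, ⟨R j r, ⟨r, rfl⟩, hComplast⟩, hCompint⟩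
    show c.L.length + Comp.length ≤ (c.L ++ (mid2 ++ Comp)).length
    simp only [List.length_append]
    omega

end Aux16

namespace Aux16
open List Set

lemma exists_chain_seq (I₄ : Set ℕ) (hI₄ : I₄.Infinite) :
    ∃ a : ℕ → ℕ, (∀ n, a n ∈ I₄) ∧ (∀ n, a n ≠ a (n + 1)) ∧
      ∀ i ∈ I₄, ∀ j ∈ I₄, i ≠ j → {n | a n = i ∧ a (n + 1) = j}.Infinite := by
  classical
  obtain ⟨e, he⟩ := (Set.to_countable I₄).exists_eq_range hI₄.nonempty
  have heI : ∀ n, e n ∈ I₄ := fun n => he ▸ ⟨n, rfl⟩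
  set d := hI₄.natEmbedding with hd
  set z : ℕ → ℕ := fun n => (d n : ℕ) with hz
  have hzI : ∀ n, z n ∈ I₄ := fun n => (d n).2
  have hzinj : Function.Injective z := fun m n h => d.injective (Subtype.ext h)
  set pick3 : ℕ → ℕ → ℕ := fun u v =>
    if z 0 ≠ u ∧ z 0 ≠ v then z 0 else if z 1 ≠ u ∧ z 1 ≠ v then z 1 else z 2 with hp3
  have hpick : ∀ u v, pick3 u v ∈ I₄ ∧ pick3 u v ≠ u ∧ pick3 u v ≠ v := by
    intro u v
    simp only [hp3]
    by_cases h0 : z 0 ≠ u ∧ z 0 ≠ v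
    · rw [if_pos h0]; exact ⟨hzI 0, h0.1, h0.2⟩
    · by_cases h1 : z 1 ≠ u ∧ z 1 ≠ v
      · rw [if_neg h0, if_pos h1]; exact ⟨hzI 1, h1.1, h1.2⟩
      · simp only [h0, h1, if_false, if_neg]
        refine ⟨hzI 2, ?_, ?_⟩
        · rintro rfl
          push_neg at h0 h1
          have h01 : z 0 ≠ z 1 := fun h => by have := hzinj h; omega
          have h02 : z 0 ≠ z 2 := fun h => by have := hzinj h; omega
          have h12 : z 1 ≠ z 2 := fun h => by have := hzinj h; omega
          by_cases hz0 : z 0 = z 2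
          · exact h02 hz0
          · have hz0v : z 0 = v := by
              rcases Classical.em (z 0 = z 2) with h | h
              · exact absurd h hz0
              · exact h0 (fun hh => h (hh))
            have hz1 : z 1 ≠ z 2 := h12
            have hz1v : z 1 = v := h1 hz1
            exact h01 (hz0v.trans hz1v.symm)
        · rintro rfl
          push_neg at h0 h1
          have h02 : z 0 ≠ z 2 := fun h => by have := hzinj h; omega
          have h12 : z 1 ≠ z 2 := fun h => by have := hzinj h; omega
          have h01 : z 0 ≠ z 1 := fun h => by have := hzinj h; omega
          have hz0u : z 0 = u := by
            rcases Classical.em (z 0 = u) with h | h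
            · exact h
            · exact absurd (h0 (fun hh => h hh)) h02
          have hz1u : z 1 = u := by
            rcases Classical.em (z 1 = u) with h | h
            · exact h
            · exact absurd (h1 (fun hh => h hh)) h12
          exact h01 (hz0u.trans hz1u.symm)
  set cseq : ℕ → ℕ × ℕ := fun n => Nat.unpair ((Nat.unpair n).2) with hcseq
  have hc : ∀ (p : ℕ × ℕ) (N : ℕ), ∃ n, N < n ∧ cseq n = p := by
    intro p N
    refine ⟨Nat.pair (N + 1) (Nat.pair p.1 p.2), ?_, ?_⟩
    · have := Nat.left_le_pair (N + 1) (Nat.pair p.1 p.2)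
      omega
    · rw [hcseq]
      simp [Nat.unpair_pair]
  set x : ℕ → ℕ := fun m => e ((cseq m).1) with hx
  set y : ℕ → ℕ := fun m => if e ((cseq m).2) = x m then pick3 (x m) (x m) else e ((cseq m).2)
    with hy
  set bf : ℕ → ℕ := fun m => pick3 (y m) (x (m + 1)) with hbf
  have hxI : ∀ m, x m ∈ I₄ := fun m => heI _
  have hyI : ∀ m, y m ∈ I₄ := by
    intro m
    rw [hy]
    dsimp only
    split
    · exact (hpick _ _).1
    · exact heI _
  have hbI : ∀ m, bf m ∈ I₄ := fun m => (hpick _ _).1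
  have hyx : ∀ m, y m ≠ x m := by
    intro m
    rw [hy]
    dsimp only
    split
    · exact (hpick _ _).2.1
    · assumption
  have hby : ∀ m, bf m ≠ y m := fun m => (hpick _ _).2.1
  have hbx : ∀ m, bf m ≠ x (m + 1) := fun m => (hpick _ _).2.2
  set a : ℕ → ℕ := fun n => if n % 3 = 0 then x (n / 3) else if n % 3 = 1 then y (n / 3)
    else bf (n / 3) with ha
  have ha0 : ∀ m, a (3 * m) = x m := by
    intro m
    have h1 : (3 * m) % 3 = 0 := by omega
    have h2 : (3 * m) / 3 = m := by omega
    simp [ha, h1, h2]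
  have ha1 : ∀ m, a (3 * m + 1) = y m := by
    intro m
    have h1 : (3 * m + 1) % 3 = 1 := by omega
    have h2 : (3 * m + 1) / 3 = m := by omega
    simp [ha, h1, h2]
  have ha2 : ∀ m, a (3 * m + 2) = bf m := by
    intro m
    have h1 : (3 * m + 2) % 3 = 2 := by omega
    have h2 : (3 * m + 2) / 3 = m := by omega
    simp [ha, h1, h2]
  refine ⟨a, ?_, ?_, ?_⟩
  · intro n
    rw [ha]
    dsimp only
    split
    · exact hxI _
    · split
      · exact hyI _
      · exact hbI _
  · intro n
    obtain ⟨m, t, ht, rfl⟩ : ∃ m t, t < 3 ∧ n = 3 * m + t :=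
      ⟨n / 3, n % 3, by omega, by omega⟩
    interval_cases t
    · rw [Nat.add_zero, ha0, ha1]
      exact fun h => hyx m h.symm
    · rw [ha1, ha2 m]
      exact fun h => hby m h.symm
    · have : 3 * m + 2 + 1 = 3 * (m + 1) := by ring
      rw [ha2, this, ha0]
      exact fun h => hbx m h
  · intro i hi j hj hij
    obtain ⟨si, hsi⟩ : ∃ si, e si = i := by
      have := he ▸ hi; exact this
    obtain ⟨sj, hsj⟩ : ∃ sj, e sj = j := by
      have := he ▸ hj; exact this
    refine Set.infinite_of_forall_exists_gt ?_
    intro N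
    obtain ⟨m, hm, hcm⟩ := hc (si, sj) N
    refine ⟨3 * m, ⟨?_, ?_⟩, by omega⟩
    · rw [ha0, hx]
      dsimp only
      rw [hcm]
      exact hsi
    · rw [ha1, hy]
      dsimp only
      rw [hcm]
      dsimp only
      rw [hsj]
      have hxm : x m = i := by rw [hx]; dsimp only; rw [hcm]; exact hsi
      rw [hxm]
      rw [if_neg (fun h => hij h.symm)]
end Aux16

/-- Claim 6.1: given disjoint equivalent out-rays `(R i)_{i ∈ ℕ}` together with forward
path families `P i j` (`i < j`) and backward path families `Q i j` (`i > j`) as in the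
proof of the main theorem, for every infinite `I₄ ⊆ ℕ` with infinite complement there is
an out-ray `S` meeting every `R i` (`i ∈ I₄`) infinitely often such that any two rays of
`I₄` are joined, in both directions, by infinitely many disjoint paths lying on `S` and
internally disjoint from `⋃_{i ∈ I₄} R i`. -/
theorem stmt16 (D : Digraph V) (R : ℕ → ℕ → V)
    (hray : ∀ i, IsOutRay D (R i))
    (hdisj : ∀ i j, i ≠ j → ∀ n m, R i n ≠ R j m)
    (hequiv : ∀ i j, i ≠ j → EquivRays D (R i) (R j))
    (P Q : ℕ → ℕ → List V)
    (hP : ∀ i j, i < j → IsDipath D (P i j) ∧ StartsIn (P i j) (Set.range (R i)) ∧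
      EndsIn (P i j) (Set.range (R j)) ∧ InternallyAvoids (P i j) (RaysUnion R))
    (hPdisj : ∀ i j k, i < j → i < k → j ≠ k → ListsDisjoint (P i j) (P i k))
    (hQ : ∀ i j, j < i → IsDipath D (Q i j) ∧ StartsIn (Q i j) (Set.range (R i)) ∧
      EndsIn (Q i j) (Set.range (R j)) ∧ InternallyAvoids (Q i j) (RaysUnion R))
    (hQdisj : ∀ i j k, k < i → k < j → i ≠ j → ListsDisjoint (Q i k) (Q j k))
    (horder : ∀ i j k, i < k → j < k → ∃ a b : ℕ,
      (P i k).getLast? = some (R k a) ∧ (Q k j).head? = some (R k b) ∧ a < b)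
    (I₄ : Set ℕ) (hI₄ : I₄.Infinite) (hI₄c : I₄ᶜ.Infinite) :
    ∃ S : ℕ → V, IsOutRay D S ∧
      (∀ i ∈ I₄, {n : ℕ | S n ∈ Set.range (R i)}.Infinite) ∧
      ∀ i ∈ I₄, ∀ j ∈ I₄, i ≠ j →
        ∃ F : ℕ → List V,
          (∀ n, IsDipath D (F n) ∧ IsSubpathOf S (F n) ∧
            StartsIn (F n) (Set.range (R i)) ∧ EndsIn (F n) (Set.range (R j)) ∧
            InternallyAvoids (F n) (⋃ k ∈ I₄, Set.range (R k))) ∧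
          ∀ m n, m ≠ n → ListsDisjoint (F m) (F n) := by
  classical
  obtain ⟨a, haI, hane, hapair⟩ := Aux16.exists_chain_seq I₄ hI₄
  have key : ∀ (n : ℕ) (c : Cfg V), ∃ c' : Cfg V,
      (OkCfg D R c → c.cur = a n →
        OkCfg D R c' ∧ c'.cur = a (n + 1) ∧ StepP D R I₄ (a n) (a (n + 1)) c c') := by
    intro n c
    by_cases h : OkCfg D R c ∧ c.cur = a n
    · obtain ⟨c', h1, h2, h3⟩ := Aux16.step_exists D R hray hdisj P Q hP hPdisj hQ hQdisj
        horder I₄ hI₄c (haI n) (haI (n + 1)) (hane n) c h.1 h.2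
      exact ⟨c', fun _ _ => ⟨h1, h2, h3⟩⟩
    · exact ⟨c, fun h1 h2 => absurd ⟨h1, h2⟩ h⟩
  choose step hstep using key
  set f : ℕ → Cfg V := fun n =>
    Nat.rec (motive := fun _ => Cfg V) ⟨[R (a 0) 0], a 0, 0⟩ (fun n cn => step n cn) n with hf
  have hf0 : f 0 = ⟨[R (a 0) 0], a 0, 0⟩ := rfl
  have hfs : ∀ n, f (n + 1) = step n (f n) := fun n => rfl
  have hok : ∀ n, OkCfg D R (f n) ∧ (f n).cur = a n := by
    intro n
    induction n with
    | zero =>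
      rw [hf0]
      refine ⟨⟨by simp, by simp, by simp [List.Chain'], rfl, ?_⟩, rfl⟩
      intro m hm
      simp only [List.mem_singleton] at hm
      have := (hray (a 0)).1 hm
      omega
    | succ n ih =>
      rw [hfs]
      exact ⟨(hstep n (f n) ih.1 ih.2).1, (hstep n (f n) ih.1 ih.2).2.1⟩
  have hstep' : ∀ n, StepP D R I₄ (a n) (a (n + 1)) (f n) (f (n + 1)) := by
    intro n
    rw [hfs]
    exact (hstep n (f n) (hok n).1 (hok n).2).2.2
  have hpref : ∀ {m n : ℕ}, m ≤ n → (f m).L <+: (f n).L := by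
    intro m n h
    induction n, h using Nat.le_induction with
    | base => exact List.prefix_refl _
    | succ n hmn ih => exact ih.trans (hstep' n).1
  have hlen : ∀ n, n < (f n).L.length := by
    intro n
    induction n with
    | zero => exact List.length_pos_iff.2 (hok 0).1.1
    | succ n ih =>
      obtain ⟨-, Comp, -, hle, hdip, -⟩ := hstep' n
      have : 1 ≤ Comp.length := List.length_pos_iff.2 hdip.1
      omega
  set S : ℕ → V := fun n => (f (n + 1)).L.getD n (R 0 0) with hS
  have hSval : ∀ (m n : ℕ) (h : n < (f m).L.length), S n = (f m).L[n] := by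
    intro m n h
    have hn1 : n < (f (n + 1)).L.length := by have := hlen (n + 1); omega
    rw [hS]
    dsimp only
    rw [List.getD_eq_getElem _ _ hn1]
    rcases le_total m (n + 1) with hmn | hmn
    · exact ((hpref hmn).getElem h).symm
    · exact (hpref hmn).getElem hn1
  have hgen : ∀ m n, m < n → S m ≠ S n := by
    intro m n hlt heq
    have hm : m < (f (n + 1)).L.length := by have := hlen (n + 1); omega
    have hn : n < (f (n + 1)).L.length := by have := hlen (n + 1); omega
    rw [hSval (n + 1) m hm, hSval (n + 1) n hn] at heq
    have := ((hok (n + 1)).1.2.1.getElem_inj_iff).1 heq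
    omega
  have hSinj : Function.Injective S := by
    intro m n h
    rcases Nat.lt_trichotomy m n with hlt | he | hlt
    · exact absurd h (hgen m n hlt)
    · exact he
    · exact absurd h.symm (hgen n m hlt)
  have hSadj : ∀ n, D.Adj (S n) (S (n + 1)) := by
    intro n
    have hch := (hok (n + 2)).1.2.2.1
    rw [List.Chain', List.isChain_iff_getElem] at hch
    have hl2 := hlen (n + 2)
    have h1 := hSval (n + 2) n (by omega)
    have h2 := hSval (n + 2) (n + 1) (by omega)
    have := hch n (by omega)
    rw [h1, h2]
    simpa [List.get_eq_getElem] using this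
  have hcompd : ∀ n, ∃ (Comp : List V) (o : ℕ),
      (f n).L.length ≤ o ∧ o + Comp.length ≤ (f (n + 1)).L.length ∧
      (∀ (m : ℕ) (hm : m < Comp.length), Comp[m] = S (o + m)) ∧
      IsDipath D Comp ∧ StartsIn Comp (Set.range (R (a n))) ∧
      EndsIn Comp (Set.range (R (a (n + 1)))) ∧
      InternallyAvoids Comp (⋃ k ∈ I₄, Set.range (R k)) := by
    intro n
    obtain ⟨-, Comp, ⟨t, ht⟩, hle, hdip, hstart, hend, hint⟩ := hstep' n
    have hlt : t.length + Comp.length = (f (n + 1)).L.length := by rw [← ht]; simp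
    refine ⟨Comp, t.length, by omega, by omega, ?_, hdip, hstart, hend, hint⟩
    intro m hm
    have hidx : t.length + m < (f (n + 1)).L.length := by omega
    rw [hSval (n + 1) (t.length + m) hidx]
    have h4 := List.getElem_of_eq ht.symm hidx
    rw [h4, List.getElem_append_right (by omega)]
    have hidx2 : t.length + m - t.length = m := by omega
    simp only [hidx2]
  choose Comp off ho1 ho2 hval hdip hstart hend hint using hcompd
  have hsubpath : ∀ n, IsSubpathOf S (Comp n) := by
    intro n
    refine ⟨off n, List.ext_getElem (by simp) ?_⟩
    intro m h1 h2
    rw [List.getElem_map, List.getElem_range]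
    exact hval n m h1
  have hdisjsteps : ∀ n n', n < n' → ListsDisjoint (Comp n) (Comp n') := by
    intro n n' hlt v hv hv'
    obtain ⟨m, hm, hme⟩ := List.mem_iff_getElem.1 hv
    obtain ⟨m', hm', hme'⟩ := List.mem_iff_getElem.1 hv'
    have he : S (off n + m) = S (off n' + m') := by
      rw [← hval n m hm, ← hval n' m' hm', hme, hme']
    have hee := hSinj he
    have hlen' : (f (n + 1)).L.length ≤ (f n').L.length :=
      (hpref (by omega : n + 1 ≤ n')).length_le
    have hcalc : off n + m < off n' + m' := by
      have c1 : off n + m < off n + (Comp n).length := by omega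
      have c2 : off n + (Comp n).length ≤ (f (n + 1)).L.length := ho2 n
      have c3 : (f n').L.length ≤ off n' := ho1 n'
      omega
    omega
  refine ⟨S, ⟨hSinj, hSadj⟩, ?_, ?_⟩
  · intro i hi
    obtain ⟨j0, hj0⟩ := (hI₄.diff (Set.finite_singleton i)).nonempty
    have hj0I : j0 ∈ I₄ := hj0.1
    have hj0ne : j0 ≠ i := by simpa using hj0.2
    have hij0 : i ≠ j0 := Ne.symm hj0ne
    have hinfsteps := hapair i hi j0 hj0I hij0
    refine Set.infinite_of_forall_exists_gt (fun N => ?_)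
    obtain ⟨n, hn, hnN⟩ := hinfsteps.exists_gt N
    obtain ⟨v, hvmem, hvhead⟩ := hstart n
    have hlenC : 0 < (Comp n).length := List.length_pos_iff.2 (hdip n).1
    have h0 : (Comp n)[0]'hlenC = v := by
      have hh := hvhead
      rw [List.head?_eq_getElem?, List.getElem?_eq_getElem hlenC] at hh
      injection hh
    refine ⟨off n, ?_, ?_⟩
    · show S (off n) ∈ Set.range (R i)
      have := hval n 0 hlenC
      rw [Nat.add_zero] at this
      rw [← this, h0]
      rw [hn.1] at hvmem
      exact hvmem
    · have := ho1 n
      have := hlen n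
      omega
  · intro i hi j hj hij
    have hinfsteps := hapair i hi j hj hij
    set g := hinfsteps.natEmbedding with hg
    refine ⟨fun t => Comp (g t : ℕ), ?_, ?_⟩
    · intro t
      have hgt := (g t).2
      refine ⟨hdip _, hsubpath _, ?_, ?_, hint _⟩
      · have hh := hstart (g t : ℕ)
        rw [hgt.1] at hh
        exact hh
      · have hh := hend (g t : ℕ)
        rw [hgt.2] at hh
        exact hh
    · intro t t' htt
      have hne : ((g t : ℕ) : ℕ) ≠ (g t' : ℕ) := by
        intro h
        exact htt (g.injective (Subtype.ext h))
      rcases Nat.lt_or_ge (g t : ℕ) (g t' : ℕ) with h | h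
      · exact hdisjsteps _ _ h
      · have hlt : ((g t' : ℕ) : ℕ) < (g t : ℕ) := by omega
        intro v hv hv'
        exact hdisjsteps _ _ hlt v hv' hv
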